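/- Suppose g_i(x) = x for every user i. Then every constrained strong equilibrium α satisfies Σ_{i=1}^N α_i = C_N, and moreover C_N = max_{β ∈ 𝒞} Σ_{i=1}^N β_i; hence the strong price of anarchy of the constrained rate allocation game equals 1 (the worst strong equilibrium achieves the social optimum). -/

import Mathlib

open scoped Classical

/-- Key log inequality: `log(1+(X+w)/c) + log(1+Y/c) ≤ log(1+(Y+w)/c) + log(1+X/c)`
whenever `0 ≤ Y ≤ X` and `0 ≤ w`, `0 < c`. -/
lemma spoa_log_ineq (c X Y w : ℝ) (hc : 0 < c) (hY : 0 ≤ Y) (hw : 0 ≤ w)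
    (hYX : Y ≤ X) :
    Real.log (1 + (X + w) / c) + Real.log (1 + Y / c) ≤
      Real.log (1 + (Y + w) / c) + Real.log (1 + X / c) := by
  have hX : 0 ≤ X := hY.trans hYX
  have h1 : (0:ℝ) < 1 + (X + w) / c := by positivity
  have h2 : (0:ℝ) < 1 + Y / c := by positivity
  have h3 : (0:ℝ) < 1 + (Y + w) / c := by positivity
  have h4 : (0:ℝ) < 1 + X / c := by positivity
  rw [← Real.log_mul h1.ne' h2.ne', ← Real.log_mul h3.ne' h4.ne']
  apply Real.log_le_log (by positivity)
  have hform : ∀ Z : ℝ, 1 + Z / c = (c + Z) / c := by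
    intro Z; field_simp
  rw [hform, hform, hform, hform, div_mul_div_comm, div_mul_div_comm,
    div_le_div_iff_of_pos_right (by positivity)]
  nlinarith [mul_nonneg hw (sub_nonneg.2 hYX)]

theorem strong_price_of_anarchy_one
    (N : ℕ) (hN : 2 ≤ N)
    (P h : Fin N → ℝ) (σ2 : ℝ)
    (hP : ∀ i, 0 < P i) (hh : ∀ i, 0 < h i) (hσ : 0 < σ2)
    (C : Finset (Fin N) → ℝ)
    (hC : ∀ Ω : Finset (Fin N), C Ω = Real.log (1 + (∑ i ∈ Ω, P i * h i) / σ2))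
    (𝒞 : Set (Fin N → ℝ))
    (h𝒞 : ∀ α, α ∈ 𝒞 ↔ ((∀ i, 0 ≤ α i) ∧
      ∀ Ω : Finset (Fin N), Ω.Nonempty → ∑ i ∈ Ω, α i ≤ C Ω))
    (u : Fin N → (Fin N → ℝ) → ℝ)
    (hu : ∀ i α, u i α = if α ∈ 𝒞 then α i else 0) :
    (∀ α ∈ 𝒞,
      (∀ D : Finset (Fin N), D.Nonempty →
        ∀ α' ∈ 𝒞, (∀ k ∉ D, α' k = α k) → ∃ i ∈ D, u i α' ≤ u i α) →
      ∑ i, α i = C Finset.univ) ∧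
    (∀ β ∈ 𝒞, ∑ i, β i ≤ C Finset.univ) ∧
    (∃ β ∈ 𝒞, ∑ i, β i = C Finset.univ) := by
  have hNpos : 0 < N := by omega
  haveI : NeZero N := ⟨by omega⟩
  set w : Fin N → ℝ := fun i => P i * h i with hw_def
  have hw : ∀ i, 0 ≤ w i := fun i => (mul_pos (hP i) (hh i)).le
  have hSnn : ∀ Ω : Finset (Fin N), 0 ≤ ∑ i ∈ Ω, w i :=
    fun Ω => Finset.sum_nonneg fun i _ => hw i
  have hC0 : C ∅ = 0 := by simp [hC]
  have hCmono : ∀ {A B : Finset (Fin N)}, A ⊆ B → C A ≤ C B := by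
    intro A B hAB
    rw [hC, hC]
    have h0 : (0:ℝ) < 1 + (∑ i ∈ A, w i) / σ2 := by
      have h1 := hSnn A
      have h2 := div_nonneg h1 hσ.le
      linarith
    apply Real.log_le_log h0
    have : ∑ i ∈ A, w i ≤ ∑ i ∈ B, w i :=
      Finset.sum_le_sum_of_subset_of_nonneg hAB (fun i _ _ => hw i)
    gcongr
  -- submodularity-type inequality in the needed telescoping form
  have hkey : ∀ (a : Fin N) (s : Finset (Fin N)), (∀ x ∈ s, x < a) →
      (C (Finset.Iic a) - C (Finset.Iio a)) + C s ≤ C (insert a s) := by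
    intro a s hs
    have has : a ∉ s := fun hmem => lt_irrefl a (hs a hmem)
    have hIic : Finset.Iic a = insert a (Finset.Iio a) := (Finset.Iio_insert a).symm
    have haIio : a ∉ Finset.Iio a := by simp
    have hsub : s ⊆ Finset.Iio a := fun x hx => Finset.mem_Iio.2 (hs x hx)
    have hXY : ∑ i ∈ s, w i ≤ ∑ i ∈ Finset.Iio a, w i :=
      Finset.sum_le_sum_of_subset_of_nonneg hsub (fun i _ _ => hw i)
    have hsumIic : ∑ i ∈ Finset.Iic a, w i = (∑ i ∈ Finset.Iio a, w i) + w a := by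
      rw [hIic, Finset.sum_insert haIio]; ring
    have hsumins : ∑ i ∈ insert a s, w i = (∑ i ∈ s, w i) + w a := by
      rw [Finset.sum_insert has]; ring
    have := spoa_log_ineq σ2 (∑ i ∈ Finset.Iio a, w i) (∑ i ∈ s, w i) (w a)
      hσ (hSnn s) (hw a) hXY
    simp only [hC, hsumIic, hsumins]
    linarith [this]
  -- submodularity for unions
  have hsubmod : ∀ A B : Finset (Fin N), C (A ∪ B) + C (A ∩ B) ≤ C A + C B := by
    intro A B
    have hmAB : ∑ i ∈ A ∩ B, w i ≤ ∑ i ∈ A, w i :=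
      Finset.sum_le_sum_of_subset_of_nonneg (Finset.inter_subset_left) (fun i _ _ => hw i)
    have hmB : ∑ i ∈ A ∩ B, w i ≤ ∑ i ∈ B, w i :=
      Finset.sum_le_sum_of_subset_of_nonneg (Finset.inter_subset_right) (fun i _ _ => hw i)
    have hui : (∑ i ∈ A ∪ B, w i) + (∑ i ∈ A ∩ B, w i) = (∑ i ∈ A, w i) + ∑ i ∈ B, w i :=
      Finset.sum_union_inter
    have := spoa_log_ineq σ2 (∑ i ∈ A, w i) (∑ i ∈ A ∩ B, w i)
      ((∑ i ∈ B, w i) - ∑ i ∈ A ∩ B, w i) hσ (hSnn _) (by linarith) hmAB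
    have hu' : ∑ i ∈ A ∪ B, w i = (∑ i ∈ A, w i) + ((∑ i ∈ B, w i) - ∑ i ∈ A ∩ B, w i) := by
      linarith
    have hB' : (∑ i ∈ A ∩ B, w i) + ((∑ i ∈ B, w i) - ∑ i ∈ A ∩ B, w i) = ∑ i ∈ B, w i := by
      ring
    simp only [hC]
    rw [hu']
    rw [hB'] at this
    linarith
  have hunivne : (Finset.univ : Finset (Fin N)).Nonempty := Finset.univ_nonempty
  -- part 2
  have part2 : ∀ β ∈ 𝒞, ∑ i, β i ≤ C Finset.univ := by
    intro β hβ
    exact ((h𝒞 β).1 hβ).2 Finset.univ hunivne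
  refine ⟨?_, part2, ?_⟩
  · -- part 1
    intro α hα Hstrong
    have hcon : ∀ Ω : Finset (Fin N), ∑ i ∈ Ω, α i ≤ C Ω := by
      intro Ω
      rcases Ω.eq_empty_or_nonempty with rfl | hne
      · simp [hC0]
      · exact ((h𝒞 α).1 hα).2 Ω hne
    have hnn : ∀ i, 0 ≤ α i := ((h𝒞 α).1 hα).1
    by_contra hne
    have hlt : ∑ i, α i < C Finset.univ := lt_of_le_of_ne (hcon Finset.univ) hne
    -- tight sets
    set Tight : Finset (Fin N) → Prop := fun Ω => ∑ i ∈ Ω, α i = C Ω with hTight_def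
    have htight_union : ∀ A B, Tight A → Tight B → Tight (A ∪ B) := by
      intro A B hA hB
      have h1 := hsubmod A B
      have h2 : (∑ i ∈ A ∪ B, α i) + (∑ i ∈ A ∩ B, α i) = (∑ i ∈ A, α i) + ∑ i ∈ B, α i :=
        Finset.sum_union_inter
      have h3 := hcon (A ∪ B)
      have h4 := hcon (A ∩ B)
      simp only [hTight_def] at hA hB ⊢
      linarith
    set T : Finset (Fin N) :=
      (Finset.univ.powerset.filter Tight).sup id with hT_def
    have hTtight : Tight T := by
      apply Finset.sup_induction
      · simp [hTight_def, hC0]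
      · intro a ha b hb
        rw [Finset.sup_eq_union]
        exact htight_union a b ha hb
      · intro Ω hΩ; exact (Finset.mem_filter.1 hΩ).2
    have hsubT : ∀ Ω, Tight Ω → Ω ⊆ T := by
      intro Ω hΩ
      exact Finset.le_sup (f := id) (Finset.mem_filter.2
        ⟨Finset.mem_powerset.2 (Finset.subset_univ Ω), hΩ⟩)
    set D : Finset (Fin N) := Finset.univ \ T with hD_def
    have hDne : D.Nonempty := by
      rw [Finset.sdiff_nonempty]
      intro hsub
      have hTuniv : T = Finset.univ :=
        le_antisymm (Finset.subset_univ T) hsub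
      have := hTtight
      rw [hTuniv] at this
      exact absurd this (ne_of_lt hlt)
    -- the set of constraining sets
    set S : Finset (Finset (Fin N)) :=
      Finset.univ.powerset.filter (fun Ω => (Ω ∩ D).Nonempty) with hS_def
    have hSne : S.Nonempty := by
      refine ⟨Finset.univ, Finset.mem_filter.2 ⟨Finset.mem_powerset.2 le_rfl, ?_⟩⟩
      rwa [Finset.univ_inter]
    set ε : ℝ := (S.inf' hSne (fun Ω => C Ω - ∑ i ∈ Ω, α i)) / N with hε_def
    have hslack : ∀ Ω ∈ S, 0 < C Ω - ∑ i ∈ Ω, α i := by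
      intro Ω hΩ
      have hΩD : (Ω ∩ D).Nonempty := (Finset.mem_filter.1 hΩ).2
      rcases lt_or_eq_of_le (hcon Ω) with hlt' | heq
      · linarith
      · exfalso
        have : Ω ⊆ T := hsubT Ω heq
        obtain ⟨x, hx⟩ := hΩD
        have hx1 : x ∈ Ω := (Finset.mem_inter.1 hx).1
        have hx2 : x ∈ D := (Finset.mem_inter.1 hx).2
        have : x ∈ T := this hx1
        rw [hD_def, Finset.mem_sdiff] at hx2
        exact hx2.2 this
    have hinfpos : 0 < S.inf' hSne (fun Ω => C Ω - ∑ i ∈ Ω, α i) :=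
      (Finset.lt_inf'_iff hSne).2 hslack
    have hεpos : 0 < ε := by
      rw [hε_def]
      positivity
    set α' : Fin N → ℝ := fun i => if i ∈ D then α i + ε else α i with hα'_def
    have hval : ∀ i, α' i = if i ∈ D then α i + ε else α i := fun i => rfl
    have hsum' : ∀ Ω : Finset (Fin N),
        ∑ i ∈ Ω, α' i = (∑ i ∈ Ω, α i) + (Ω ∩ D).card * ε := by
      intro Ω
      have hsplit : ∀ i, α' i = α i + (if i ∈ D then ε else 0) := by
        intro i; rw [hval i]; split <;> simp
      simp only [hsplit, Finset.sum_add_distrib, Finset.sum_ite_mem, Finset.sum_const,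
        nsmul_eq_mul]
    have hα'𝒞 : α' ∈ 𝒞 := by
      rw [h𝒞]
      constructor
      · intro i
        rw [hval i]
        split_ifs with hi
        · linarith [hnn i]
        · exact hnn i
      · intro Ω hΩne
        rw [hsum' Ω]
        rcases (Ω ∩ D).eq_empty_or_nonempty with hemp | hΩD
        · rw [hemp]
          simpa using hcon Ω
        · have hΩS : Ω ∈ S :=
            Finset.mem_filter.2 ⟨Finset.mem_powerset.2 (Finset.subset_univ Ω), hΩD⟩
          have hcard : ((Ω ∩ D).card : ℝ) ≤ (N : ℝ) := by
            have : (Ω ∩ D).card ≤ N := by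
              calc (Ω ∩ D).card ≤ (Finset.univ : Finset (Fin N)).card :=
                    Finset.card_le_card (Finset.subset_univ _)
                _ = N := by simp
            exact_mod_cast this
          have hNε : (N : ℝ) * ε = S.inf' hSne (fun Ω => C Ω - ∑ i ∈ Ω, α i) := by
            rw [hε_def]
            field_simp
          have hle : S.inf' hSne (fun Ω => C Ω - ∑ i ∈ Ω, α i) ≤ C Ω - ∑ i ∈ Ω, α i :=
            Finset.inf'_le _ hΩS
          have : ((Ω ∩ D).card : ℝ) * ε ≤ (N : ℝ) * ε :=
            mul_le_mul_of_nonneg_right hcard hεpos.le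
          linarith
    obtain ⟨i, hiD, hui⟩ := Hstrong D hDne α' hα'𝒞 (fun k hk => if_neg hk)
    rw [hu, hu, if_pos hα'𝒞, if_pos hα] at hui
    have hα'i : α' i = α i + ε := by rw [hval i, if_pos hiD]
    rw [hα'i] at hui
    linarith
  · -- part 3: the corner point
    set β : Fin N → ℝ := fun i => C (Finset.Iic i) - C (Finset.Iio i) with hβ_def
    have hβval : ∀ i, β i = C (Finset.Iic i) - C (Finset.Iio i) := fun i => rfl
    have hβnn : ∀ i, 0 ≤ β i := by
      intro i
      have : C (Finset.Iio i) ≤ C (Finset.Iic i) := hCmono Finset.Iio_subset_Iic_self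
      rw [hβval i]; linarith
    have hβle : ∀ Ω : Finset (Fin N), ∑ i ∈ Ω, β i ≤ C Ω := by
      intro Ω
      induction Ω using Finset.induction_on_max with
      | empty => simp [hC0]
      | insert a s hs ih =>
        have has : a ∉ s := fun hmem => lt_irrefl a (hs a hmem)
        rw [Finset.sum_insert has]
        have := hkey a s hs
        rw [hβval a]
        linarith
    -- telescoping sum over univ
    set F : ℕ → ℝ := fun n => C (Finset.univ.filter (fun i : Fin N => (i : ℕ) < n))
      with hF_def
    have hβF : ∀ i : Fin N, β i = F ((i : ℕ) + 1) - F (i : ℕ) := by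
      intro i
      have h1 : Finset.Iic i = Finset.univ.filter (fun j : Fin N => (j : ℕ) < (i : ℕ) + 1) := by
        ext j
        simp only [Finset.mem_Iic, Finset.mem_filter, Finset.mem_univ, true_and]
        rw [Fin.le_def]
        omega
      have h2 : Finset.Iio i = Finset.univ.filter (fun j : Fin N => (j : ℕ) < (i : ℕ)) := by
        ext j
        simp only [Finset.mem_Iio, Finset.mem_filter, Finset.mem_univ, true_and]
        rw [Fin.lt_def]
      rw [hβval i, h1, h2]
    have hsumβ : ∑ i, β i = C Finset.univ := by
      calc ∑ i, β i = ∑ i : Fin N, (F ((i : ℕ) + 1) - F (i : ℕ)) := by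
            exact Finset.sum_congr rfl fun i _ => hβF i
        _ = ∑ n ∈ Finset.range N, (F (n + 1) - F n) :=
            Fin.sum_univ_eq_sum_range (fun n => F (n + 1) - F n) N
        _ = F N - F 0 := Finset.sum_range_sub F N
        _ = C Finset.univ := by
            have hFN : Finset.univ.filter (fun i : Fin N => (i : ℕ) < N) = Finset.univ := by
              ext j; simp [j.isLt]
            have hF0 : Finset.univ.filter (fun i : Fin N => (i : ℕ) < 0) = ∅ := by
              ext j; simp
            show C _ - C _ = C Finset.univ
            rw [hFN, hF0, hC0]
            ring
    refine ⟨β, ?_, hsumβ⟩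
    rw [h𝒞]
    exact ⟨hβnn, fun Ω _ => hβle Ω⟩
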